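/- arXiv:1301.6883 — 4 statements merged into one kernel-verified Lean document; each statement's English description precedes it below -/
import Mathlib

section
/- Let A, B be C*-algebras, C a common C*-subalgebra of both, A₀ ⊆ A and B₀ ⊆ B dense *-subalgebras, and π : A₀ → B₀ a surjective *-homomorphism. Suppose P_A : A → C is a conditional expectation and P_B : B → C is a faithful conditional expectation such that P_B ∘ π = P_A on A₀. Then π extends to a surjective *-homomorphism from A onto B. -/
private lemma faithful_norm_le {B C : Type*} [CStarAlgebra B] [CStarAlgebra C]
    [PartialOrder C] [StarOrderedRing C]
    (PB : B →ₗ[ℂ] C) (hPBpos : ∀ b : B, 0 ≤ PB (star b * b))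
    (hPBfaithful : ∀ b : B, PB (star b * b) = 0 → b = 0)
    (b : B) {M : ℝ} (hM : 0 ≤ M)
    (hbound : ∀ m : ℕ, 1 ≤ m → ‖PB ((star b * b) ^ m)‖ ≤ M ^ m) :
    ‖b‖ ^ 2 ≤ M := by
  by_contra hlt
  push_neg at hlt
  set x := star b * b with hx
  have hxsa : IsSelfAdjoint x := IsSelfAdjoint.star_mul_self b
  have hxnn : ∀ l ∈ spectrum ℝ x, 0 ≤ l := spectrum_star_mul_self_nonneg
  have hnormx : ‖x‖ = ‖b‖ ^ 2 := by rw [hx, CStarRing.norm_star_mul_self, sq]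
  have htM : M < ‖x‖ := by rw [hnormx]; exact hlt
  have ht : 0 < ‖x‖ := lt_of_le_of_lt hM htM
  set t := ‖x‖ with htdef
  set s := (M + t) / 2 with hs
  have hsM : M < s := by rw [hs]; linarith
  have hst : s < t := by rw [hs]; linarith
  have hs0 : 0 < s := by linarith
  set c := (s + t) / 2 with hc
  have hsc : s < c := by rw [hc]; linarith
  have hct : c < t := by rw [hc]; linarith
  have hc0 : 0 < c := by linarith
  -- a spectral value above c
  obtain ⟨l₀, hl₀mem, hl₀⟩ : ∃ l ∈ spectrum ℝ x, c ≤ l := by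
    by_contra hcon
    push_neg at hcon
    have h1 : ‖cfc (id : ℝ → ℝ) x‖ < c :=
      norm_cfc_lt hc0 (fun l hl => by
        simp only [id_eq, Real.norm_eq_abs]
        rw [abs_of_nonneg (hxnn l hl)]
        exact hcon l hl)
    rw [cfc_id ℝ x hxsa] at h1
    linarith
  set g : ℝ → ℝ := fun l => min 1 (max 0 (l - s)) with hg
  have hgc : Continuous g :=
    continuous_const.min (continuous_const.max (continuous_id.sub continuous_const))
  have hg0 : ∀ l, 0 ≤ g l := fun l => le_min zero_le_one (le_max_left _ _)
  have hg1 : ∀ l, g l ≤ 1 := fun l => min_le_left _ _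
  set w := cfc g x with hw
  have hwsa : IsSelfAdjoint w := cfc_predicate g x
  have hmin : (0:ℝ) < min 1 (c - s) := lt_min one_pos (by linarith)
  have hwpos : min 1 (c - s) ≤ ‖w‖ := by
    have h2 := norm_apply_le_norm_cfc g x hl₀mem hgc.continuousOn hxsa
    refine le_trans ?_ h2
    rw [Real.norm_eq_abs, abs_of_nonneg (hg0 l₀)]
    exact min_le_min le_rfl (le_trans (by linarith) (le_max_right 0 (l₀ - s)))
  have hw0 : w ≠ 0 := by
    intro h
    rw [h, norm_zero] at hwpos
    linarith
  have hPBww : 0 ≤ PB (w * w) := by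
    have h3 := hPBpos w
    rwa [hwsa.star_eq] at h3
  set δ := ‖PB (w * w)‖ with hδdef
  have hδ : 0 < δ := by
    refine norm_pos_iff.mpr fun h => hw0 (hPBfaithful w ?_)
    rwa [hwsa.star_eq]
  have key : ∀ m : ℕ, 1 ≤ m → s ^ m * δ ≤ M ^ m := by
    intro m hm
    set q : ℝ → ℝ := fun l => l ^ m - s ^ m * g l ^ 2 with hq
    have hqcont : Continuous q := by
      apply Continuous.sub (continuous_pow m)
      exact continuous_const.mul (hgc.pow 2)
    have hqnn : ∀ l ∈ spectrum ℝ x, 0 ≤ q l := by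
      intro l hl
      have h0l := hxnn l hl
      rcases le_or_gt l s with hls | hls
      · have hgz : g l = 0 := by
          rw [hg]
          simp only
          rw [max_eq_left (by linarith), min_eq_right zero_le_one]
        rw [hq]; simp only [hgz]
        simpa using pow_nonneg h0l m
      · have hpow : s ^ m ≤ l ^ m := pow_le_pow_left₀ hs0.le hls.le m
        have := hg0 l
        have := hg1 l
        rw [hq]; simp only
        have hgsq : g l ^ 2 ≤ 1 := by nlinarith
        nlinarith [mul_nonneg (pow_nonneg hs0.le m) (sub_nonneg.mpr hgsq)]
    set v := cfc (fun l => Real.sqrt (q l)) x with hv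
    have hvsa : IsSelfAdjoint v := cfc_predicate _ x
    have hsqc : ContinuousOn (fun l => Real.sqrt (q l)) (spectrum ℝ x) :=
      (Real.continuous_sqrt.comp hqcont).continuousOn
    have hvv : v * v = cfc q x := by
      rw [hv, ← cfc_mul (fun l => Real.sqrt (q l)) (fun l => Real.sqrt (q l)) x hsqc hsqc]
      exact cfc_congr fun l hl => Real.mul_self_sqrt (hqnn l hl)
    set u := cfc (fun l => Real.sqrt (s ^ m) * g l) x with hu
    have husa : IsSelfAdjoint u := cfc_predicate _ x
    have huu1 : u * u = cfc (fun l => s ^ m * (g l * g l)) x := by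
      rw [hu, ← cfc_mul (fun l => Real.sqrt (s ^ m) * g l) (fun l => Real.sqrt (s ^ m) * g l) x
        (continuous_const.mul hgc).continuousOn (continuous_const.mul hgc).continuousOn]
      refine cfc_congr fun l _ => ?_
      rw [show (Real.sqrt (s ^ m) * g l) * (Real.sqrt (s ^ m) * g l)
          = (Real.sqrt (s ^ m) * Real.sqrt (s ^ m)) * (g l * g l) from by ring,
        Real.mul_self_sqrt (pow_nonneg hs0.le m)]
    have huu : u * u = s ^ m • (w * w) := by
      rw [huu1, cfc_const_mul (s ^ m) (fun l => g l * g l) x (hgc.mul hgc).continuousOn,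
        cfc_mul g g x hgc.continuousOn hgc.continuousOn]
    have hdecomp : u * u + v * v = x ^ m := by
      rw [huu1, hvv,
        ← cfc_add (a := x) (fun l => s ^ m * (g l * g l)) _ (continuous_const.mul (hgc.mul hgc)).continuousOn hqcont.continuousOn]
      have h5 : cfc (fun l => s ^ m * (g l * g l) + q l) x = cfc (fun l : ℝ => l ^ m) x := by
        refine cfc_congr fun l _ => ?_
        rw [hq]; ring
      rw [h5]
      have h6 := cfc_pow (id : ℝ → ℝ) m x continuousOn_id hxsa
      rw [cfc_id ℝ x hxsa] at h6
      simpa using h6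
    have hPBu : 0 ≤ PB (u * u) := by
      have h7 := hPBpos u
      rwa [husa.star_eq] at h7
    have hPBv : 0 ≤ PB (v * v) := by
      have h7 := hPBpos v
      rwa [hvsa.star_eq] at h7
    have hle : PB (u * u) ≤ PB (x ^ m) := by
      rw [← hdecomp, map_add]
      exact le_add_of_nonneg_right hPBv
    have h8 : ‖PB (u * u)‖ ≤ ‖PB (x ^ m)‖ :=
      CStarAlgebra.norm_le_norm_of_nonneg_of_le hPBu hle
    have h9 : ‖PB (u * u)‖ = s ^ m * δ := by
      rw [huu, PB.map_smul_of_tower, norm_smul, Real.norm_eq_abs,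
        abs_of_pos (pow_pos hs0 m), hδdef]
    rw [← h9]
    exact le_trans h8 (hbound m hm)
  have hM0 : 0 < M := by
    rcases hM.lt_or_eq with h | h
    · exact h
    · exfalso
      have h10 := key 1 le_rfl
      rw [pow_one, pow_one, ← h] at h10
      nlinarith
  have hr : M / s < 1 := (div_lt_one hs0).mpr hsM
  obtain ⟨n, hn⟩ := exists_pow_lt_of_lt_one hδ hr
  have h1 := key (n + 1) (Nat.le_add_left 1 n)
  have h2 : δ ≤ (M / s) ^ (n + 1) := by
    rw [div_pow, le_div_iff₀ (pow_pos hs0 _)]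
    nlinarith
  have h3 : (M / s) ^ (n + 1) < δ := by
    rw [pow_succ]
    calc (M / s) ^ n * (M / s) ≤ (M / s) ^ n * 1 :=
          mul_le_mul_of_nonneg_left hr.le (pow_nonneg (by positivity) n)
      _ = (M / s) ^ n := mul_one _
      _ < δ := hn
  linarith

/-- extension lemma, Lemma 3.7 of the paper, surjectivity part.
Let `A, B` be C*-algebras, `C` a common C*-subalgebra of both (given by isometric
star-algebra embeddings `jA, jB`), `A₀ ⊆ A` and `B₀ ⊆ B` dense *-subalgebras, and
`π : A₀ → B₀` a surjective *-homomorphism.  Suppose `PA : A → C` is a conditional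
expectation and `PB : B → C` is a faithful conditional expectation with
`PB ∘ π = PA` on `A₀`.  Then `π` extends to a surjective *-homomorphism from `A` onto `B`. -/
theorem stmt0
    {A B C : Type*} [CStarAlgebra A] [CStarAlgebra B] [CStarAlgebra C]
    [PartialOrder C] [StarOrderedRing C]
    (jA : C →⋆ₐ[ℂ] A) (jB : C →⋆ₐ[ℂ] B)
    (hjA : Isometry jA) (hjB : Isometry jB)
    (A₀ : StarSubalgebra ℂ A) (B₀ : StarSubalgebra ℂ B)
    (hA₀ : Dense (A₀ : Set A)) (hB₀ : Dense (B₀ : Set B))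
    (π : A₀ →⋆ₐ[ℂ] B) (hπ : Set.range π = (B₀ : Set B))
    (PA : A →ₗ[ℂ] C) (PB : B →ₗ[ℂ] C)
    -- `PA` is a conditional expectation onto `C`:
    (hPAcontr : ∀ a, ‖PA a‖ ≤ ‖a‖)
    (hPAproj : ∀ c, PA (jA c) = c)
    (hPApos : ∀ a : A, 0 ≤ PA (star a * a))
    (hPAbimod : ∀ (c₁ c₂ : C) (a : A), PA (jA c₁ * a * jA c₂) = c₁ * PA a * c₂)
    -- `PB` is a faithful conditional expectation onto `C`:
    (hPBcontr : ∀ b, ‖PB b‖ ≤ ‖b‖)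
    (hPBproj : ∀ c, PB (jB c) = c)
    (hPBpos : ∀ b : B, 0 ≤ PB (star b * b))
    (hPBbimod : ∀ (c₁ c₂ : C) (b : B), PB (jB c₁ * b * jB c₂) = c₁ * PB b * c₂)
    (hPBfaithful : ∀ b : B, PB (star b * b) = 0 → b = 0)
    -- compatibility: `PB ∘ π = PA` on `A₀`:
    (hcompat : ∀ a : A₀, PB (π a) = PA (a : A)) :
    ∃ πext : A →⋆ₐ[ℂ] B, Continuous πext ∧ Function.Surjective πext ∧
      ∀ a : A₀, πext (a : A) = π a := by
  classical
  -- Step 1: contractivity of `π`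
  have hcontr : ∀ a : A₀, ‖π a‖ ≤ ‖(a : A)‖ := by
    intro a
    have h2 : ‖π a‖ ^ 2 ≤ ‖(a : A)‖ ^ 2 := by
      refine faithful_norm_le PB hPBpos hPBfaithful (π a) (by positivity) ?_
      intro m hm
      have hx : star (π a) * π a = π (star a * a) := by rw [map_mul, map_star]
      rw [hx, ← map_pow, hcompat]
      have hcoe : (((star a * a) ^ m : A₀) : A) = (star (a : A) * (a : A)) ^ m := by
        norm_cast
      rw [hcoe]
      calc ‖PA ((star (a : A) * (a : A)) ^ m)‖ ≤ ‖(star (a : A) * (a : A)) ^ m‖ := hPAcontr _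
        _ ≤ ‖star (a : A) * (a : A)‖ ^ m := norm_pow_le' _ hm
        _ = (‖(a : A)‖ ^ 2) ^ m := by rw [CStarRing.norm_star_mul_self, sq]
    nlinarith [norm_nonneg (π a), norm_nonneg ((a : A))]
  -- Step 2: extension to a continuous linear map
  let e : A₀ →L[ℂ] A := ⟨A₀.subtype.toAlgHom.toLinearMap, continuous_subtype_val⟩
  have hde : DenseRange (⇑e) := by
    have : Set.range ⇑e = (A₀ : Set A) := Subtype.range_val
    rw [DenseRange, this]; exact hA₀
  have hie : Isometry (⇑e) := fun x y => rfl
  have hue : IsUniformInducing (⇑e) := hie.isUniformInducing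
  let πL : A₀ →L[ℂ] B := LinearMap.mkContinuous π.toAlgHom.toLinearMap 1
    (fun a => by simpa using hcontr a)
  let F : A →L[ℂ] B := πL.extend e
  have hFa : ∀ a : A₀, F ((a : A)) = π a := fun a =>
    ContinuousLinearMap.extend_eq πL hde hue a
  have hmul : ∀ x y : A, F (x * y) = F x * F y := by
    have hfg : (fun p : A × A => F (p.1 * p.2)) = fun p : A × A => F p.1 * F p.2 := by
      refine Continuous.ext_on (hA₀.prod hA₀) ?_ ?_ ?_
      · exact F.continuous.comp (continuous_fst.mul continuous_snd)
      · exact (F.continuous.comp continuous_fst).mul (F.continuous.comp continuous_snd)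
      · rintro ⟨x, y⟩ ⟨hx, hy⟩
        calc F (x * y) = F (((⟨x, hx⟩ * ⟨y, hy⟩ : A₀) : A)) := rfl
          _ = π (⟨x, hx⟩ * ⟨y, hy⟩) := hFa _
          _ = π ⟨x, hx⟩ * π ⟨y, hy⟩ := map_mul π _ _
          _ = F x * F y := by rw [← hFa ⟨x, hx⟩, ← hFa ⟨y, hy⟩]
    exact fun x y => congrFun hfg (x, y)
  have hstar : ∀ x : A, F (star x) = star (F x) := by
    have hfg : (fun x : A => F (star x)) = fun x : A => star (F x) := by
      refine Continuous.ext_on hA₀ (F.continuous.comp continuous_star) F.continuous.star ?_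
      intro x hx
      calc F (star x) = F (((star ⟨x, hx⟩ : A₀) : A)) := rfl
        _ = π (star ⟨x, hx⟩) := hFa _
        _ = star (π ⟨x, hx⟩) := map_star π _
        _ = star (F x) := by rw [← hFa ⟨x, hx⟩]
    exact fun x => congrFun hfg x
  have hone : F 1 = 1 := by
    calc F 1 = F (((1 : A₀) : A)) := by norm_cast
      _ = π 1 := hFa 1
      _ = 1 := map_one π
  let πext : A →⋆ₐ[ℂ] B :=
    { toFun := ⇑F
      map_one' := hone
      map_mul' := hmul
      map_zero' := map_zero F
      map_add' := fun x y => map_add F x y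
      commutes' := fun z => by
        calc F (algebraMap ℂ A z) = F (z • 1) := by rw [Algebra.algebraMap_eq_smul_one]
          _ = z • F 1 := map_smul F z 1
          _ = z • (1 : B) := by rw [hone]
          _ = algebraMap ℂ B z := (Algebra.algebraMap_eq_smul_one z).symm
      map_star' := hstar }
  have hπext_cont : Continuous ⇑πext := F.continuous
  have hπextA₀ : ∀ a : A₀, πext ((a : A)) = π a := hFa
  have hπext_norm : ∀ x : A, ‖πext x‖ ≤ ‖x‖ := fun x =>
    NonUnitalStarAlgHom.norm_apply_le πext x
  -- Step 3: norm-controlled lifts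
  have lift_sa : ∀ v : A₀, IsSelfAdjoint v → ∃ u : A, πext u = π v ∧ ‖u‖ ≤ ‖π v‖ := by
    intro v hv
    have heBsa : IsSelfAdjoint (π v) := hv.map π
    set r := ‖π v‖ with hr
    have hvA : IsSelfAdjoint ((v : A)) := congrArg Subtype.val hv.star_eq
    set f : ℝ → ℝ := fun l => max (-r) (min r l) with hf
    have hfc : Continuous f := continuous_const.max (continuous_const.min continuous_id)
    set u := cfc f ((v : A)) with hu
    have h1 : πext ((v : A)) = π v := hπextA₀ v
    have hπva : IsSelfAdjoint (πext ((v : A))) := h1 ▸ heBsa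
    have hπu : πext u = cfc f (π v) := by
      rw [hu, StarAlgHom.map_cfc πext f ((v : A)) hfc.continuousOn hπext_cont hvA hπva, h1]
    have hfeB : cfc f (π v) = π v := by
      have heq : Set.EqOn f id (spectrum ℝ (π v)) := by
        intro l hl
        have hnl : ‖l‖ ≤ ‖π v‖ := by
          have h3 := norm_apply_le_norm_cfc (id : ℝ → ℝ) (π v) hl continuousOn_id heBsa
          rwa [cfc_id ℝ (π v) heBsa, id_eq] at h3
        rw [Real.norm_eq_abs] at hnl
        have h2 := abs_le.mp hnl
        simp only [hf, id_eq]
        rw [min_eq_right h2.2, max_eq_right h2.1]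
      rw [cfc_congr heq, cfc_id ℝ (π v) heBsa]
    have hnu : ‖u‖ ≤ r := by
      refine norm_cfc_le (norm_nonneg (π v)) ?_
      intro l hl
      rw [Real.norm_eq_abs, abs_le]
      refine ⟨le_max_left _ _, max_le (by linarith [norm_nonneg (π v)]) (min_le_left _ _)⟩
    exact ⟨u, by rw [hπu, hfeB], hnu⟩
  have lift_any : ∀ v : A₀, ∃ u : A, πext u = π v ∧ ‖u‖ ≤ 2 * ‖π v‖ := by
    intro v
    obtain ⟨h₁, hh₁⟩ : ∃ h₁ : A₀, h₁ = (2⁻¹ : ℂ) • (v + star v) := ⟨_, rfl⟩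
    obtain ⟨k₁, hk₁⟩ : ∃ k₁ : A₀, k₁ = (-(Complex.I) / 2) • (v - star v) := ⟨_, rfl⟩
    have hstar2 : star ((2⁻¹ : ℂ)) = (2⁻¹ : ℂ) := by
      simp [Complex.ext_iff]
    have hstarI : star (-(Complex.I) / 2) = Complex.I / 2 := by
      simp [Complex.ext_iff]
    have hh₁sa : IsSelfAdjoint h₁ := by
      rw [IsSelfAdjoint, hh₁, star_smul, star_add, star_star, hstar2, add_comm]
    have hk₁sa : IsSelfAdjoint k₁ := by
      rw [IsSelfAdjoint, hk₁, star_smul, star_sub, star_star, hstarI]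
      module
    have hsum : h₁ + Complex.I • k₁ = v := by
      rw [hh₁, hk₁, smul_smul]
      rw [show Complex.I * (-(Complex.I) / 2) = (2⁻¹ : ℂ) by
        rw [show Complex.I * (-(Complex.I) / 2) = -(Complex.I * Complex.I) / 2 by ring,
          Complex.I_mul_I]; norm_num]
      module
    obtain ⟨u₁, hu₁, hn₁⟩ := lift_sa h₁ hh₁sa
    obtain ⟨u₂, hu₂, hn₂⟩ := lift_sa k₁ hk₁sa
    refine ⟨u₁ + Complex.I • u₂, ?_, ?_⟩
    · rw [map_add, map_smul, hu₁, hu₂, ← map_smul, ← map_add, hsum]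
    · have hb₁ : ‖π h₁‖ ≤ ‖π v‖ := by
        rw [hh₁, map_smul, map_add, map_star]
        calc ‖(2⁻¹ : ℂ) • (π v + star (π v))‖
            = ‖(2⁻¹ : ℂ)‖ * ‖π v + star (π v)‖ := norm_smul _ _
          _ ≤ 2⁻¹ * (‖π v‖ + ‖star (π v)‖) := by
              rw [show ‖(2⁻¹ : ℂ)‖ = (2⁻¹ : ℝ) by norm_num]
              exact mul_le_mul_of_nonneg_left (norm_add_le _ _) (by norm_num)
          _ = ‖π v‖ := by rw [norm_star]; ring
      have hb₂ : ‖π k₁‖ ≤ ‖π v‖ := by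
        rw [hk₁, map_smul, map_sub, map_star]
        calc ‖(-(Complex.I) / 2) • (π v - star (π v))‖
            = ‖(-(Complex.I) / 2 : ℂ)‖ * ‖π v - star (π v)‖ := norm_smul _ _
          _ ≤ 2⁻¹ * (‖π v‖ + ‖star (π v)‖) := by
              rw [show ‖(-(Complex.I) / 2 : ℂ)‖ = (2⁻¹ : ℝ) by
                simp [norm_div, Complex.norm_I]]
              exact mul_le_mul_of_nonneg_left (norm_sub_le _ _) (by norm_num)
          _ = ‖π v‖ := by rw [norm_star]; ring
      calc ‖u₁ + Complex.I • u₂‖ ≤ ‖u₁‖ + ‖Complex.I • u₂‖ := norm_add_le _ _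
        _ = ‖u₁‖ + ‖u₂‖ := by rw [norm_smul, Complex.norm_I, one_mul]
        _ ≤ ‖π h₁‖ + ‖π k₁‖ := add_le_add hn₁ hn₂
        _ ≤ ‖π v‖ + ‖π v‖ := add_le_add hb₁ hb₂
        _ = 2 * ‖π v‖ := by ring
  -- Step 4: surjectivity via controlled closure
  let fN : NormedAddGroupHom A B :=
    AddMonoidHom.mkNormedAddGroupHom (AddMonoidHom.mk' ⇑πext (map_add πext)) 1
      (fun x => by simpa using hπext_norm x)
  let K : AddSubgroup B := B₀.toSubalgebra.toSubring.toAddSubgroup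
  have hsurjK : fN.SurjectiveOnWith K 2 := by
    intro b hb
    have hb' : b ∈ (B₀ : Set B) := hb
    rw [← hπ] at hb'
    obtain ⟨v, hv⟩ := hb'
    obtain ⟨u, hu, hnu⟩ := lift_any v
    refine ⟨u, ?_, ?_⟩
    · show πext u = b; rw [hu, hv]
    · rw [← hv]; exact hnu
  have hsurj : Function.Surjective ⇑πext := by
    intro b
    have hb : b ∈ K.topologicalClosure := by
      show b ∈ closure (K : Set B)
      have hKset : (K : Set B) = (B₀ : Set B) := rfl
      rw [hKset, hB₀.closure_eq]
      trivial
    obtain ⟨g, hg, -⟩ := controlled_closure_of_complete (f := fN) (K := K)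
      (by norm_num : (0:ℝ) < 2) (by norm_num : (0:ℝ) < 1) hsurjK b hb
    exact ⟨g, hg⟩
  exact ⟨πext, hπext_cont, hsurj, hπextA₀⟩
end

section
/- Let B be a C*-algebra with a faithful conditional expectation P : B → C onto a C*-subalgebra C, and let B₀ ⊆ B be a dense *-subalgebra. Then for every b ∈ B, ‖b‖² = sup{‖P(c* b* b c)‖ : c ∈ B₀, P(c*c) ≤ 1}. -/
/-- Let `B` be a C*-algebra with a faithful conditional expectation
`P : B → C` onto a C*-subalgebra `C` (given by an isometric star-algebra embedding `jC`),
and let `B₀ ⊆ B` be a dense *-subalgebra.  Then for every `b ∈ B`,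
`‖b‖² = sup {‖P(c* b* b c)‖ : c ∈ B₀, P(c*c) ≤ 1}`. -/
theorem stmt2
    {B C : Type*} [CStarAlgebra B] [CStarAlgebra C]
    [PartialOrder C] [StarOrderedRing C]
    (jC : C →⋆ₐ[ℂ] B) (hjC : Isometry jC)
    (P : B →ₗ[ℂ] C)
    -- `P` is a conditional expectation onto `C`:
    (hPcontr : ∀ b, ‖P b‖ ≤ ‖b‖)
    (hPproj : ∀ c, P (jC c) = c)
    (hPpos : ∀ b : B, 0 ≤ P (star b * b))
    (hPbimod : ∀ (c₁ c₂ : C) (b : B), P (jC c₁ * b * jC c₂) = c₁ * P b * c₂)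
    -- `P` is faithful:
    (hPfaithful : ∀ b : B, P (star b * b) = 0 → b = 0)
    (B₀ : StarSubalgebra ℂ B) (hB₀ : Dense (B₀ : Set B))
    (b : B) :
    ‖b‖ ^ 2 =
      sSup {r : ℝ | ∃ c ∈ B₀, P (star c * c) ≤ 1 ∧
        r = ‖P (star c * (star b * (b * c)))‖} := by
  letI : PartialOrder B := CStarAlgebra.spectralOrder B
  letI : StarOrderedRing B := CStarAlgebra.spectralOrderedRing B
  set S : Set ℝ := {r : ℝ | ∃ c ∈ B₀, P (star c * c) ≤ 1 ∧
        r = ‖P (star c * (star b * (b * c)))‖} with hS_def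
  -- positivity and monotonicity of `P`
  have hPposB : ∀ x : B, 0 ≤ x → 0 ≤ P x := by
    intro x hx
    rw [StarOrderedRing.nonneg_iff] at hx
    induction hx using AddSubmonoid.closure_induction with
    | mem y hy => obtain ⟨s, rfl⟩ := hy; exact hPpos s
    | zero => simp
    | add x y _ _ hx hy => rw [map_add]; exact add_nonneg hx hy
  have hPmono : ∀ x y : B, x ≤ y → P x ≤ P y := by
    intro x y h
    have h0 := hPposB _ (sub_nonneg.mpr h)
    rw [map_sub] at h0
    exact sub_nonneg.mp h0
  have hP1 : P 1 = 1 := by simpa using hPproj 1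
  have hPsmulR : ∀ (r : ℝ) (x : B), P (r • x) = r • P x := fun r x => P.map_smul_of_tower r x
  have h1B : (0 : B) ≤ 1 := by simpa using star_mul_self_nonneg (1 : B)
  have hassoc : ∀ c : B, star c * (star b * (b * c)) = star c * (star b * b) * c :=
    fun c => by simp only [mul_assoc]
  have hsq : ∀ c : B, star c * (star b * b) * c = star (b * c) * (b * c) :=
    fun c => by rw [star_mul]; simp only [mul_assoc]
  rcases subsingleton_or_nontrivial C with hC | hC
  · -- trivial case: `C` (hence `B`) is the zero algebra
    haveI : Subsingleton B := ⟨fun x y => by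
      have hx : x = 0 := hPfaithful x (Subsingleton.elim _ _)
      have hy : y = 0 := hPfaithful y (Subsingleton.elim _ _)
      rw [hx, hy]⟩
    have hb0 : b = 0 := Subsingleton.elim b 0
    have hSeq : S = {0} := by
      apply Set.eq_singleton_iff_unique_mem.mpr
      refine ⟨⟨0, zero_mem B₀, le_of_eq (Subsingleton.elim _ _), ?_⟩, ?_⟩
      · rw [Subsingleton.elim (P (star (0:B) * (star b * (b * 0)))) 0, norm_zero]
      · rintro r ⟨c, -, -, rfl⟩
        rw [Subsingleton.elim (P (star c * (star b * (b * c)))) 0, norm_zero]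
    rw [hSeq, csSup_singleton, hb0, norm_zero]
    norm_num
  -- nontrivial case
  set a : B := star b * b with ha_def
  have haM : ‖a‖ = ‖b‖ ^ 2 := by rw [ha_def, CStarRing.norm_star_mul_self]; ring
  have ha0 : (0 : B) ≤ a := star_mul_self_nonneg b
  have hasa : IsSelfAdjoint a := IsSelfAdjoint.star_mul_self b
  -- upper bound for every member of `S`
  have hub : ∀ c : B, P (star c * c) ≤ 1 → ‖P (star c * (star b * (b * c)))‖ ≤ ‖b‖ ^ 2 := by
    intro c hc
    have h1 : star c * a * c ≤ ‖a‖ • (star c * c) :=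
      CStarAlgebra.star_left_conjugate_le_norm_smul hasa
    have h2 : P (star c * a * c) ≤ ‖a‖ • P (star c * c) := by
      have h := hPmono _ _ h1
      rwa [hPsmulR] at h
    have h3 : ‖a‖ • P (star c * c) ≤ ‖a‖ • (1 : C) :=
      smul_le_smul_of_nonneg_left hc (norm_nonneg a)
    have h0 : (0 : C) ≤ P (star c * a * c) := by
      rw [hsq c]; exact hPpos _
    calc ‖P (star c * (star b * (b * c)))‖ = ‖P (star c * a * c)‖ := by rw [hassoc c]
      _ ≤ ‖‖a‖ • (1 : C)‖ := CStarAlgebra.norm_le_norm_of_nonneg_of_le h0 (h2.trans h3)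
      _ = ‖a‖ * ‖(1 : C)‖ := by rw [norm_smul, Real.norm_of_nonneg (norm_nonneg a)]
      _ = ‖b‖ ^ 2 := by rw [norm_one, mul_one, haM]
  have hbdd : BddAbove S := ⟨‖b‖ ^ 2, by rintro r ⟨c, -, h1, rfl⟩; exact hub c h1⟩
  have h0S : (0 : ℝ) ∈ S := by
    refine ⟨0, zero_mem B₀, ?_, by simp⟩
    rw [star_zero, mul_zero, map_zero]
    simpa using star_mul_self_nonneg (1 : C)
  refine le_antisymm ?_ (Real.sSup_le (by rintro r ⟨c, -, h1, rfl⟩; exact hub c h1)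
    (by positivity))
  -- the hard direction: `‖b‖ ^ 2 ≤ sSup S`
  refine le_of_forall_pos_le_add fun ε hε => ?_
  rcases le_or_gt (‖b‖ ^ 2) ε with hle | hlt
  · have := le_csSup hbdd h0S
    linarith
  -- now `0 < ε < ‖b‖ ^ 2 = ‖a‖`
  have hb0 : b ≠ 0 := by
    intro h; rw [h, norm_zero] at hlt; simpa using hε.trans hlt
  haveI : Nontrivial B := nontrivial_of_ne b 0 hb0
  -- approximation step: anything achievable with `c₀ : B` is nearly achievable within `B₀`
  have approx : ∀ c₀ : B, P (star c₀ * c₀) ≤ 1 → ∀ δ : ℝ, 0 < δ →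
      ∃ r ∈ S, ‖P (star c₀ * (star b * (b * c₀)))‖ - δ ≤ r := by
    intro c₀ hc₀ δ hδ
    set V := ‖P (star c₀ * (star b * (b * c₀)))‖ with hV
    have hV0 : 0 ≤ V := norm_nonneg _
    set η := δ / (2 * (V + 1)) with hη
    have hη0 : 0 < η := by positivity
    set f : B → ℝ := fun c => ‖star c * c - star c₀ * c₀‖ +
        ‖star c * (star b * (b * c)) - star c₀ * (star b * (b * c₀))‖ with hf
    have hfc : Continuous f := by
      apply Continuous.add
      · exact ((continuous_star.mul continuous_id).sub continuous_const).norm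
      · exact ((continuous_star.mul (continuous_const.mul
          (continuous_const.mul continuous_id))).sub continuous_const).norm
    obtain ⟨c', hc'0, hc'⟩ := hB₀.exists_mem_open (isOpen_lt hfc continuous_const)
      ⟨c₀, by
        show f c₀ < η
        simp only [hf, sub_self, norm_zero, add_zero]
        exact hη0⟩
    have hc' : f c' < η := hc'
    have h1 : ‖star c' * c' - star c₀ * c₀‖ < η := by
      have := norm_nonneg (star c' * (star b * (b * c')) - star c₀ * (star b * (b * c₀)))
      rw [hf] at hc'; dsimp only at hc'; linarith
    have h2 : ‖P (star c' * (star b * (b * c'))) - P (star c₀ * (star b * (b * c₀)))‖ < η := by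
      rw [← map_sub]
      refine lt_of_le_of_lt (hPcontr _) ?_
      have := norm_nonneg (star c' * c' - star c₀ * c₀)
      rw [hf] at hc'; dsimp only at hc'; linarith
    -- bound `P (star c' * c')`
    have hΔsa : IsSelfAdjoint (star c' * c' - star c₀ * c₀) :=
      (IsSelfAdjoint.star_mul_self c').sub (IsSelfAdjoint.star_mul_self c₀)
    have hsm1 : ∀ r s : ℝ, r ≤ s → (r • (1:B) : B) ≤ s • (1:B) := by
      intro r s h
      have h' := smul_nonneg (sub_nonneg.mpr h) h1B
      rw [sub_smul] at h'
      exact sub_nonneg.mp h'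
    have hle : star c' * c' ≤ star c₀ * c₀ + η • 1 := by
      have h3 : star c' * c' - star c₀ * c₀ ≤
          algebraMap ℝ B ‖star c' * c' - star c₀ * c₀‖ :=
        IsSelfAdjoint.le_algebraMap_norm_self hΔsa
      rw [Algebra.algebraMap_eq_smul_one] at h3
      have h4 := h3.trans (hsm1 _ _ h1.le)
      calc star c' * c' = star c₀ * c₀ + (star c' * c' - star c₀ * c₀) := by abel
        _ ≤ star c₀ * c₀ + η • 1 := add_le_add_right h4 _
    have hPc' : P (star c' * c') ≤ (1 + η) • 1 := by
      have h5 := hPmono _ _ hle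
      rw [map_add, hPsmulR, hP1] at h5
      calc P (star c' * c') ≤ P (star c₀ * c₀) + η • 1 := h5
        _ ≤ 1 + η • 1 := add_le_add_left hc₀ _
        _ = (1 + η) • 1 := by rw [add_smul, one_smul]
    -- rescale into the unit ball
    set t : ℝ := (Real.sqrt (1 + η))⁻¹ with ht
    have htt : t * t = (1 + η)⁻¹ := by
      rw [ht, ← mul_inv, Real.mul_self_sqrt (by positivity)]
    set c'' : B := t • c' with hc''
    have hc''0 : c'' ∈ B₀ := by
      rw [hc'', ← Complex.coe_smul]
      exact B₀.smul_mem hc'0 _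
    have hη1 : (0:ℝ) < 1 + η := by linarith
    -- membership facts for `c''`
    have hsc : star c'' * c'' = (1 + η)⁻¹ • (star c' * c') := by
      rw [hc'', star_smul, star_trivial]
      simp only [smul_mul_assoc, mul_smul_comm, smul_smul]
      rw [htt]
    have hPc'' : P (star c'' * c'') ≤ 1 := by
      rw [hsc, hPsmulR]
      have h6 : (1 + η)⁻¹ • P (star c' * c') ≤ (1 + η)⁻¹ • ((1 + η) • (1:C)) :=
        smul_le_smul_of_nonneg_left hPc' (by positivity)
      rwa [smul_smul, inv_mul_cancel₀ hη1.ne', one_smul] at h6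
    have hval : star c'' * (star b * (b * c'')) =
        (1 + η)⁻¹ • (star c' * (star b * (b * c'))) := by
      rw [hc'', star_smul, star_trivial]
      simp only [smul_mul_assoc, mul_smul_comm, smul_smul]
      rw [htt]
    set W := ‖P (star c' * (star b * (b * c')))‖ with hW
    have hr : ‖P (star c'' * (star b * (b * c'')))‖ = (1 + η)⁻¹ * W := by
      rw [hval, hPsmulR, norm_smul, Real.norm_of_nonneg (by positivity)]
    refine ⟨‖P (star c'' * (star b * (b * c'')))‖, ⟨c'', hc''0, hPc'', rfl⟩, ?_⟩
    -- arithmetic: `V - δ ≤ (1 + η)⁻¹ * W` given `|W - V| ≤ ‖..‖ < η`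
    have hWV : V - η ≤ W := by
      have h7 := abs_norm_sub_norm_le (P (star c' * (star b * (b * c'))))
        (P (star c₀ * (star b * (b * c₀))))
      rw [abs_le] at h7
      have := h7.1
      rw [← hW, ← hV] at this
      linarith [h2]
    rw [hr]
    have hηδ : η * (2 * (V + 1)) = δ := by
      rw [hη]; field_simp
    have key : V - δ ≤ (1 + η)⁻¹ * (V - η) := by
      rw [inv_mul_eq_div, le_div_iff₀ hη1]
      nlinarith
    calc V - δ ≤ (1 + η)⁻¹ * (V - η) := key
      _ ≤ (1 + η)⁻¹ * W := by
          apply mul_le_mul_of_nonneg_left (by linarith) (by positivity)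
  -- the main construction via continuous functional calculus
  set ε2 : ℝ := ε / 2 with hε2_def
  have hε2 : 0 < ε2 := by positivity
  have hε2M : ε2 < ‖a‖ := by rw [haM]; linarith
  set g : ℝ → ℝ := fun x => min 1 (max 0 ((x - (‖a‖ - ε2)) / ε2)) with hg_def
  have hgc : Continuous g := by
    apply continuous_const.min
    exact continuous_const.max ((continuous_id.sub continuous_const).div_const ε2)
  have hg0 : ∀ x, 0 ≤ g x := fun x => le_min zero_le_one (le_max_left _ _)
  have hgM : g ‖a‖ = 1 := by
    show min 1 (max 0 ((‖a‖ - (‖a‖ - ε2)) / ε2)) = 1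
    rw [sub_sub_cancel, div_self hε2.ne', max_eq_right zero_le_one, min_self]
  have hgkey : ∀ x : ℝ, (‖a‖ - ε2) * (g x * g x) ≤ g x * (x * g x) := by
    intro x
    rcases le_or_gt x (‖a‖ - ε2) with h | h
    · have h0 : (x - (‖a‖ - ε2)) / ε2 ≤ 0 :=
        div_nonpos_of_nonpos_of_nonneg (by linarith) hε2.le
      have hgx : g x = 0 :=
        le_antisymm ((min_le_right _ _).trans (max_le le_rfl h0)) (hg0 x)
      simp [hgx]
    · have hgx := hg0 x
      nlinarith
  have hMem : ‖a‖ ∈ spectrum ℝ a := CStarAlgebra.norm_mem_spectrum_of_nonneg ha0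
  set d : B := cfc g a with hd_def
  have hcg : ContinuousOn g (spectrum ℝ a) := hgc.continuousOn
  have hcgg : ContinuousOn (fun x => g x * g x) (spectrum ℝ a) := (hgc.mul hgc).continuousOn
  have hcxg : ContinuousOn (fun x : ℝ => x * g x) (spectrum ℝ a) :=
    (continuous_id.mul hgc).continuousOn
  have hd0 : (0 : B) ≤ d := cfc_nonneg fun x _ => hg0 x
  have hdsa : IsSelfAdjoint d := IsSelfAdjoint.of_nonneg hd0
  have hkey : (‖a‖ - ε2) • (d * d) ≤ d * (a * d) := by
    have hmono : cfc (fun x => (‖a‖ - ε2) * (g x * g x)) a ≤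
        cfc (fun x => g x * (x * g x)) a :=
      cfc_mono (fun x _ => hgkey x) (continuous_const.mul (hgc.mul hgc)).continuousOn
        (hgc.mul (continuous_id.mul hgc)).continuousOn
    have hL : cfc (fun x => (‖a‖ - ε2) * (g x * g x)) a = (‖a‖ - ε2) • (d * d) := by
      rw [cfc_const_mul (‖a‖ - ε2) (fun x => g x * g x) a hcgg, cfc_mul g g a hcg hcg]
    have hR : cfc (fun x => g x * (x * g x)) a = d * (a * d) := by
      rw [cfc_mul g (fun x => x * g x) a hcg hcxg,
        cfc_mul (fun x : ℝ => x) g a continuous_id.continuousOn hcg, cfc_id' ℝ a hasa]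
    rwa [hL, hR] at hmono
  have hd_ne : d ≠ 0 := by
    have h1spec : (1 : ℝ) ∈ spectrum ℝ d := by
      rw [hd_def, cfc_map_spectrum g a hasa hcg]
      exact ⟨‖a‖, hMem, hgM⟩
    intro h
    rw [h] at h1spec
    rw [spectrum.zero_eq] at h1spec
    exact one_ne_zero (Set.mem_singleton_iff.mp h1spec)
  have hPdd0 : (0 : C) ≤ P (d * d) := by
    have := hPpos d; rwa [hdsa.star_eq] at this
  have hPdd_ne : P (d * d) ≠ 0 := by
    intro h
    exact hd_ne (hPfaithful d (by rwa [hdsa.star_eq]))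
  set s : ℝ := ‖P (d * d)‖ with hs_def
  have hs : 0 < s := norm_pos_iff.mpr hPdd_ne
  set t : ℝ := (Real.sqrt s)⁻¹ with ht_def
  have htt : t * t = s⁻¹ := by
    rw [ht_def, ← mul_inv, Real.mul_self_sqrt hs.le]
  set c₀ : B := t • d with hc₀_def
  have hsc₀ : star c₀ * c₀ = s⁻¹ • (d * d) := by
    rw [hc₀_def, star_smul, star_trivial, hdsa.star_eq]
    simp only [smul_mul_assoc, mul_smul_comm, smul_smul]
    rw [htt]
  have hPc₀ : P (star c₀ * c₀) ≤ 1 := by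
    rw [hsc₀, hPsmulR]
    have h8 : P (d * d) ≤ s • (1 : C) := by
      have := IsSelfAdjoint.le_algebraMap_norm_self (IsSelfAdjoint.of_nonneg hPdd0)
      rwa [Algebra.algebraMap_eq_smul_one] at this
    have h9 : s⁻¹ • P (d * d) ≤ s⁻¹ • (s • (1 : C)) :=
      smul_le_smul_of_nonneg_left h8 (by positivity)
    rwa [smul_smul, inv_mul_cancel₀ hs.ne', one_smul] at h9
  have hc₀val : ‖b‖ ^ 2 - ε2 ≤ ‖P (star c₀ * (star b * (b * c₀)))‖ := by
    have hval : star c₀ * (star b * (b * c₀)) = s⁻¹ • (d * (a * d)) := by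
      rw [hc₀_def, star_smul, star_trivial, hdsa.star_eq]
      simp only [smul_mul_assoc, mul_smul_comm, smul_smul]
      rw [htt, ha_def]
      simp only [mul_assoc]
    have hPle : (‖a‖ - ε2) • P (d * d) ≤ P (d * (a * d)) := by
      have := hPmono _ _ hkey
      rwa [hPsmulR] at this
    have hnrm : (‖a‖ - ε2) * s ≤ ‖P (d * (a * d))‖ := by
      have h10 : ‖(‖a‖ - ε2) • P (d * d)‖ ≤ ‖P (d * (a * d))‖ :=
        CStarAlgebra.norm_le_norm_of_nonneg_of_le
          (smul_nonneg (by linarith) hPdd0) hPle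
      rwa [norm_smul, Real.norm_of_nonneg (by linarith), ← hs_def] at h10
    rw [hval, hPsmulR, norm_smul, Real.norm_of_nonneg (by positivity)]
    have : (‖a‖ - ε2) = s⁻¹ * ((‖a‖ - ε2) * s) := by field_simp
    calc ‖b‖ ^ 2 - ε2 = ‖a‖ - ε2 := by rw [haM]
      _ = s⁻¹ * ((‖a‖ - ε2) * s) := this
      _ ≤ s⁻¹ * ‖P (d * (a * d))‖ :=
          mul_le_mul_of_nonneg_left hnrm (by positivity)
  obtain ⟨r, hrS, hr⟩ := approx c₀ hPc₀ ε2 hε2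
  have hrle := le_csSup hbdd hrS
  have : ‖b‖ ^ 2 - ε2 - ε2 ≤ r := by linarith [hc₀val]
  rw [hε2_def] at this
  linarith
end

section
/- With the notation of the Choi-matrix construction: φ : M_n(ℂ) → A a contractive completely positive map, b = [φ(e_{ij})]^{1/2} ∈ M_n(A), and η = Σ_{j,k} ξ_j ⊗ ξ_k ⊗ b_{kj} ∈ ℓ²_n ⊗ ℓ²_n ⊗ A, we have ‖η‖² = ‖φ(1)‖ ≤ 1. -/
attribute [local instance] Matrix.linftyOpNormedRing Matrix.linftyOpNormedAlgebra

/-- With the notation of the Choi-matrix construction: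
`φ : Mₙ(ℂ) → A` a contractive completely positive map, `b = [φ(e_{ij})]^{1/2} ∈ Mₙ(A)`,
and `η = Σ_{j,k} ξ_j ⊗ ξ_k ⊗ b_{kj} ∈ ℓ²ₙ ⊗ ℓ²ₙ ⊗ A`, we have
`‖η‖² = ‖⟨η, η⟩‖ = ‖Σ_{j,k} b_{kj}* b_{kj}‖ = ‖φ(1)‖ ≤ 1`. -/
theorem stmt7
    {A : Type*} [CStarAlgebra A] (n : ℕ)
    (φ : Matrix (Fin n) (Fin n) ℂ →ₗ[ℂ] A)
    -- `φ` is completely positive: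
    (hφcp : ∀ (k : ℕ) (M : Matrix (Fin k) (Fin k) (Matrix (Fin n) (Fin n) ℂ)),
      (∃ N : Matrix (Fin k) (Fin k) (Matrix (Fin n) (Fin n) ℂ), M = star N * N) →
        ∃ L : Matrix (Fin k) (Fin k) A, M.map (fun m => φ m) = star L * L)
    -- `φ` is contractive:
    (hφcontr : ∀ m : Matrix (Fin n) (Fin n) ℂ, ‖φ m‖ ≤ ‖m‖)
    -- `b` is the positive square root of the Choi matrix `[φ(e_{ij})]`:
    (b : Matrix (Fin n) (Fin n) A)
    (hbsa : star b = b)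
    (hb : star b * b = Matrix.of fun i j => φ (Matrix.single i j (1 : ℂ))) :
    ‖∑ j, ∑ k, star (b k j) * b k j‖ = ‖φ 1‖ ∧ ‖φ 1‖ ≤ 1 := by
  have key : (∑ j, ∑ k, star (b k j) * b k j) = φ 1 := by
    have h1 : (∑ j, ∑ k, star (b k j) * b k j) = ∑ j, (star b * b) j j := by
      refine Finset.sum_congr rfl fun j _ => ?_
      simp [Matrix.mul_apply, Matrix.star_apply]
    rw [h1, hb]
    have h2 : (1 : Matrix (Fin n) (Fin n) ℂ) = ∑ j, Matrix.single j j (1 : ℂ) := by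
      ext i j
      by_cases h : i = j <;>
        simp [Matrix.sum_apply, Matrix.single, Matrix.one_apply, h, eq_comm,
          Finset.filter_eq', Finset.card_eq_zero, Finset.filter_eq_empty_iff]
      · have he : (Finset.filter (fun x => i = x ∧ j = x) Finset.univ) = ∅ := by
          ext x
          simp only [Finset.mem_filter, Finset.notMem_empty, iff_false, not_and]
          intro _ hx hx'
          exact h (hx.trans hx'.symm)
        simp [he]
    simp only [Matrix.of_apply]
    rw [h2, map_sum]
  refine ⟨by rw [key], ?_⟩
  rcases Nat.eq_zero_or_pos n with hn | hn
  · subst hn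
    have : (1 : Matrix (Fin 0) (Fin 0) ℂ) = 0 := by ext i; exact i.elim0
    simp [this]
  · have : Nonempty (Fin n) := ⟨⟨0, hn⟩⟩
    calc ‖φ 1‖ ≤ ‖(1 : Matrix (Fin n) (Fin n) ℂ)‖ := hφcontr 1
    _ = 1 := norm_one
end

section
/- Let Γ be a discrete group acting on a C*-algebra A by *-automorphisms. Then the reduced crossed product A ⋊_r Γ is the unique C*-completion of the *-algebra C_c(Γ, A) of finitely supported A-valued functions (with twisted convolution and involution) admitting a faithful conditional expectation onto A extending evaluation at the identity; in particular, any two such completions are canonically *-isomorphic via the identity on C_c(Γ, A). -/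
/-- The twisted convolution product on `C_c(Γ, A) = Γ →₀ A` associated with an action
`act` of `Γ` on `A`: `(f * g)(γ) = Σ_{γ = αβ} f(α) · α(g(β))`. -/
noncomputable def crossedMul {Γ A : Type*} [Group Γ] [Ring A] [Algebra ℂ A] [StarRing A]
    (act : Γ → A ≃⋆ₐ[ℂ] A) (f g : Γ →₀ A) : Γ →₀ A :=
  f.sum fun α x => g.sum fun β y => Finsupp.single (α * β) (x * act α y)

/-- The twisted involution on `C_c(Γ, A)`: `f*(γ) = α_γ(f(γ⁻¹)*)`. -/
noncomputable def crossedStar {Γ A : Type*} [Group Γ] [Ring A] [Algebra ℂ A] [StarRing A]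
    (act : Γ → A ≃⋆ₐ[ℂ] A) (f : Γ →₀ A) : Γ →₀ A :=
  f.sum fun γ x => Finsupp.single γ⁻¹ (act γ⁻¹ (star x))

private lemma stmt15_norm_le {Γ A : Type*} [Group Γ] [CStarAlgebra A]
    [PartialOrder A] [StarOrderedRing A]
    (act : Γ → A ≃⋆ₐ[ℂ] A) {B₁ B₂ : Type*} [CStarAlgebra B₁] [CStarAlgebra B₂]
    (j₁ : (Γ →₀ A) →ₗ[ℂ] B₁) (j₂ : (Γ →₀ A) →ₗ[ℂ] B₂)
    (hj₁mul : ∀ f g, j₁ (crossedMul act f g) = j₁ f * j₁ g)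
    (hj₂mul : ∀ f g, j₂ (crossedMul act f g) = j₂ f * j₂ g)
    (hj₁star : ∀ f, j₁ (crossedStar act f) = star (j₁ f))
    (hj₂star : ∀ f, j₂ (crossedStar act f) = star (j₂ f))
    (hj₁dense : Dense (Set.range j₁))
    (P₁ : B₁ →ₗ[ℂ] A) (P₂ : B₂ →ₗ[ℂ] A)
    (hP₁contr : ∀ b, ‖P₁ b‖ ≤ ‖b‖)
    (hP₁pos : ∀ b : B₁, 0 ≤ P₁ (star b * b)) (hP₂pos : ∀ b : B₂, 0 ≤ P₂ (star b * b))
    (hP₁ev : ∀ f : Γ →₀ A, P₁ (j₁ f) = f 1) (hP₂ev : ∀ f : Γ →₀ A, P₂ (j₂ f) = f 1)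
    (hP₁faith : ∀ b : B₁, P₁ (star b * b) = 0 → b = 0)
    (f : Γ →₀ A) : ‖j₁ f‖ ≤ ‖j₂ f‖ := by
  rcases subsingleton_or_nontrivial B₂ with hB₂ | hB₂
  · have hA : ∀ a : A, a = 0 := fun a => by
      have h1 : (Finsupp.single (1:Γ) a) 1 = a := Finsupp.single_eq_same
      have h2 := hP₂ev (Finsupp.single 1 a)
      rw [h1] at h2
      rw [← h2, Subsingleton.elim (j₂ (Finsupp.single 1 a)) 0, map_zero]
    have hf0 : f = 0 := Finsupp.ext fun γ => hA _
    simp [hf0]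
  rcases subsingleton_or_nontrivial B₁ with hB₁ | hB₁
  · rw [Subsingleton.elim (j₁ f) 0]
    simpa using norm_nonneg (j₂ f)
  -- main case
  have ht0 : (0:ℝ) ≤ ‖star (j₂ f) * j₂ f‖ := norm_nonneg _
  set t : ℝ := ‖star (j₂ f) * j₂ f‖ with ht
  -- the key intrinsic inequality, proved using the completion `B₂`
  have key : ∀ g : Γ →₀ A,
      (crossedMul act (crossedStar act g)
        (crossedMul act (crossedStar act f) (crossedMul act f g))) 1
        ≤ t • (crossedMul act (crossedStar act g) g) 1 := by
    intro g
    set a₂ : B₂ := star (j₂ f) * j₂ f with ha₂def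
    have ha₂ : IsSelfAdjoint a₂ := IsSelfAdjoint.star_mul_self _
    have hspec : ∀ x ∈ spectrum ℝ a₂, x ≤ t := fun x hx =>
      (le_abs_self x).trans (by simpa [Real.norm_eq_abs] using spectrum.norm_le_norm_of_mem hx)
    have hcs : Continuous fun x : ℝ => Real.sqrt (t - x) :=
      Real.continuous_sqrt.comp (continuous_const.sub continuous_id)
    set d : B₂ := cfc (fun x : ℝ => Real.sqrt (t - x)) a₂ with hd
    have hdsa : IsSelfAdjoint d := cfc_predicate _ a₂
    have hdd : d * d = algebraMap ℝ B₂ t - a₂ := by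
      rw [hd, ← cfc_mul _ _ a₂ hcs.continuousOn hcs.continuousOn]
      have heq : cfc (fun x : ℝ => Real.sqrt (t - x) * Real.sqrt (t - x)) a₂
          = cfc (fun x : ℝ => t - x) a₂ :=
        cfc_congr fun x hx => Real.mul_self_sqrt (sub_nonneg.2 (hspec x hx))
      rw [heq, cfc_sub (fun _ : ℝ => t) (fun x : ℝ => x) a₂, cfc_const t a₂ ha₂,
        cfc_id' ℝ a₂ ha₂]
    set y : B₂ := j₂ g with hy
    have hxx : star (d * y) * (d * y) = t • (star y * y) - star y * (a₂ * y) := by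
      rw [star_mul, hdsa.star_eq, mul_assoc, ← mul_assoc d d y, hdd, sub_mul, mul_sub,
        Algebra.algebraMap_eq_smul_one, smul_mul_assoc, one_mul, mul_smul_comm]
    have h0 := hP₂pos (d * y)
    rw [hxx, map_sub, LinearMap.map_smul_of_tower] at h0
    have e1 : star y * y = j₂ (crossedMul act (crossedStar act g) g) := by
      rw [hj₂mul, hj₂star]
    have e2 : star y * (a₂ * y) = j₂ (crossedMul act (crossedStar act g)
        (crossedMul act (crossedStar act f) (crossedMul act f g))) := by
      rw [hj₂mul, hj₂star, hj₂mul, hj₂star, hj₂mul, ha₂def, hy, mul_assoc]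
    rw [e1, e2, hP₂ev, hP₂ev] at h0
    exact sub_nonneg.1 h0
  -- now work in `B₁`
  letI : PartialOrder B₁ := CStarAlgebra.spectralOrder B₁
  letI : StarOrderedRing B₁ := CStarAlgebra.spectralOrderedRing B₁
  set a₁ : B₁ := star (j₁ f) * j₁ f with ha₁def
  have ha₁ : IsSelfAdjoint a₁ := IsSelfAdjoint.star_mul_self _
  set h : B₁ := algebraMap ℝ B₁ t - a₁ with hhdef
  have hKrange : ∀ g : Γ →₀ A, 0 ≤ P₁ (star (j₁ g) * (h * j₁ g)) := by
    intro g
    have hxx : star (j₁ g) * (h * j₁ g)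
        = t • (star (j₁ g) * j₁ g) - star (j₁ g) * (a₁ * j₁ g) := by
      rw [hhdef, sub_mul, mul_sub, Algebra.algebraMap_eq_smul_one, smul_mul_assoc, one_mul,
        mul_smul_comm]
    have e1 : star (j₁ g) * j₁ g = j₁ (crossedMul act (crossedStar act g) g) := by
      rw [hj₁mul, hj₁star]
    have e2 : star (j₁ g) * (a₁ * j₁ g) = j₁ (crossedMul act (crossedStar act g)
        (crossedMul act (crossedStar act f) (crossedMul act f g))) := by
      rw [hj₁mul, hj₁star, hj₁mul, hj₁star, hj₁mul, ha₁def, mul_assoc]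
    rw [hxx, e1, e2, map_sub, LinearMap.map_smul_of_tower, hP₁ev, hP₁ev, sub_nonneg]
    exact key g
  have hP₁c : Continuous ⇑P₁ :=
    AddMonoidHomClass.continuous_of_bound P₁ 1 fun x => by simpa using hP₁contr x
  have hKall : ∀ ξ : B₁, 0 ≤ P₁ (star ξ * (h * ξ)) := by
    have hcontF : Continuous fun ξ : B₁ => P₁ (star ξ * (h * ξ)) :=
      hP₁c.comp (continuous_star.mul (continuous_const.mul continuous_id))
    have hcl : IsClosed {ξ : B₁ | 0 ≤ P₁ (star ξ * (h * ξ))} :=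
      CStarAlgebra.isClosed_nonneg.preimage hcontF
    have hsub : Set.range ⇑j₁ ⊆ {ξ : B₁ | 0 ≤ P₁ (star ξ * (h * ξ))} := by
      rintro - ⟨g, rfl⟩; exact hKrange g
    intro ξ
    have hcc := closure_minimal hsub hcl
    rw [hj₁dense.closure_eq] at hcc
    exact hcc (Set.mem_univ ξ)
  have hcm : Continuous fun x : ℝ => max (x - t) 0 :=
    (continuous_id.sub continuous_const).max continuous_const
  have hcsq : Continuous fun x : ℝ => Real.sqrt (max (x - t) 0) :=
    Real.continuous_sqrt.comp hcm
  have hct : Continuous fun x : ℝ => t - x := continuous_const.sub continuous_id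
  set c : B₁ := cfc (fun x : ℝ => max (x - t) 0) a₁ with hcdef
  have hcsa : IsSelfAdjoint c := cfc_predicate _ a₁
  set ξ₀ : B₁ := cfc (fun x : ℝ => Real.sqrt (max (x - t) 0)) a₁ with hξdef
  have hξsa : IsSelfAdjoint ξ₀ := cfc_predicate _ a₁
  have hh : h = cfc (fun x : ℝ => t - x) a₁ := by
    rw [cfc_sub (fun _ : ℝ => t) (fun x : ℝ => x) a₁, cfc_const t a₁ ha₁, cfc_id' ℝ a₁ ha₁,
      hhdef]
  have hmain : star ξ₀ * (h * ξ₀) = -(c * c) := by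
    rw [hξsa.star_eq, hh, hξdef,
      ← cfc_mul _ _ a₁ hct.continuousOn hcsq.continuousOn,
      ← cfc_mul (fun x : ℝ => Real.sqrt (max (x - t) 0))
        (fun x : ℝ => (t - x) * Real.sqrt (max (x - t) 0)) a₁ hcsq.continuousOn
        (hct.mul hcsq).continuousOn, hcdef,
      ← cfc_mul _ _ a₁ hcm.continuousOn hcm.continuousOn, ← cfc_neg]
    refine cfc_congr fun x _ => ?_
    have h0 : Real.sqrt (max (x - t) 0) * Real.sqrt (max (x - t) 0) = max (x - t) 0 :=
      Real.mul_self_sqrt (le_max_right _ _)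
    have h1 : Real.sqrt (max (x - t) 0) * ((t - x) * Real.sqrt (max (x - t) 0))
        = (t - x) * (Real.sqrt (max (x - t) 0) * Real.sqrt (max (x - t) 0)) := by ring
    rw [h1, h0]
    rcases le_total x t with hx | hx
    · rw [max_eq_right (sub_nonpos.2 hx)]; ring
    · rw [max_eq_left (sub_nonneg.2 hx)]; ring
  have h1 := hKall ξ₀
  rw [hmain, map_neg] at h1
  have h2 : P₁ (star c * c) = 0 := by
    rw [hcsa.star_eq]
    refine le_antisymm (neg_nonneg.1 h1) ?_
    have h3 := hP₁pos c
    rwa [hcsa.star_eq] at h3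
  have hc0 : c = 0 := hP₁faith c h2
  have hsplit : h = cfc (fun x : ℝ => max (t - x) 0) a₁ - c := by
    rw [hcdef, ← cfc_sub (fun x : ℝ => max (t - x) 0) (fun x : ℝ => max (x - t) 0) a₁
      (hct.max continuous_const).continuousOn hcm.continuousOn, hh]
    refine cfc_congr fun x _ => ?_
    rcases le_total x t with hx | hx
    · rw [max_eq_right (sub_nonpos.2 hx), max_eq_left (sub_nonneg.2 (by linarith))]; ring
    · rw [max_eq_left (sub_nonneg.2 hx), max_eq_right (sub_nonpos.2 (by linarith))]; ring
  have hhn : (0 : B₁) ≤ h := by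
    rw [hsplit, hc0, sub_zero]
    exact cfc_nonneg fun x _ => le_max_right _ _
  have hle : a₁ ≤ algebraMap ℝ B₁ t := by
    rw [hhdef] at hhn
    exact sub_nonneg.1 hhn
  have hnorm : ‖a₁‖ ≤ t :=
    calc ‖a₁‖ ≤ ‖algebraMap ℝ B₁ t‖ :=
          CStarAlgebra.norm_le_norm_of_nonneg_of_le (star_mul_self_nonneg _) hle
      _ = ‖t‖ := norm_algebraMap' B₁ t
      _ = t := by rw [Real.norm_eq_abs, abs_of_nonneg ht0]
  have e3 : ‖a₁‖ = ‖j₁ f‖ * ‖j₁ f‖ := CStarRing.norm_star_mul_self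
  have e4 : t = ‖j₂ f‖ * ‖j₂ f‖ := CStarRing.norm_star_mul_self
  rw [e3, e4] at hnorm
  exact nonneg_le_nonneg_of_sq_le_sq (norm_nonneg _) hnorm

/-- Let `Γ` be a discrete group acting on a C*-algebra `A` by
*-automorphisms.  The reduced crossed product `A ⋊_r Γ` is the unique C*-completion of
the *-algebra `C_c(Γ, A)` (finitely supported `A`-valued functions with twisted
convolution and involution) admitting a faithful conditional expectation onto `A`
extending evaluation at the identity: any two such completions `B₁`, `B₂` are
canonically *-isomorphic via the identity on `C_c(Γ, A)`. -/
theorem stmt15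
    {Γ : Type*} [Group Γ] {A : Type*} [CStarAlgebra A]
    [PartialOrder A] [StarOrderedRing A]
    -- the action of `Γ` on `A` by *-automorphisms:
    (act : Γ → A ≃⋆ₐ[ℂ] A)
    (hact_one : ∀ a : A, act 1 a = a)
    (hact_mul : ∀ (γ δ : Γ) (a : A), act (γ * δ) a = act γ (act δ a))
    -- two C*-completions of `C_c(Γ, A)`:
    {B₁ B₂ : Type*} [CStarAlgebra B₁] [CStarAlgebra B₂]
    (j₁ : (Γ →₀ A) →ₗ[ℂ] B₁) (j₂ : (Γ →₀ A) →ₗ[ℂ] B₂)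
    (hj₁mul : ∀ f g, j₁ (crossedMul act f g) = j₁ f * j₁ g)
    (hj₂mul : ∀ f g, j₂ (crossedMul act f g) = j₂ f * j₂ g)
    (hj₁star : ∀ f, j₁ (crossedStar act f) = star (j₁ f))
    (hj₂star : ∀ f, j₂ (crossedStar act f) = star (j₂ f))
    (hj₁inj : Function.Injective j₁) (hj₂inj : Function.Injective j₂)
    (hj₁dense : Dense (Set.range j₁)) (hj₂dense : Dense (Set.range j₂))
    -- faithful conditional expectations onto `A` extending evaluation at the identity:
    (P₁ : B₁ →ₗ[ℂ] A) (P₂ : B₂ →ₗ[ℂ] A)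
    (hP₁contr : ∀ b, ‖P₁ b‖ ≤ ‖b‖) (hP₂contr : ∀ b, ‖P₂ b‖ ≤ ‖b‖)
    (hP₁pos : ∀ b : B₁, 0 ≤ P₁ (star b * b)) (hP₂pos : ∀ b : B₂, 0 ≤ P₂ (star b * b))
    (hP₁ev : ∀ f : Γ →₀ A, P₁ (j₁ f) = f 1) (hP₂ev : ∀ f : Γ →₀ A, P₂ (j₂ f) = f 1)
    (hP₁faith : ∀ b : B₁, P₁ (star b * b) = 0 → b = 0)
    (hP₂faith : ∀ b : B₂, P₂ (star b * b) = 0 → b = 0) :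
    ∃ Φ : B₁ ≃⋆ₐ[ℂ] B₂, Isometry Φ ∧ ∀ f : Γ →₀ A, Φ (j₁ f) = j₂ f := by
  have hnorm : ∀ f : Γ →₀ A, ‖j₁ f‖ = ‖j₂ f‖ := fun f =>
    le_antisymm
      (stmt15_norm_le act j₁ j₂ hj₁mul hj₂mul hj₁star hj₂star hj₁dense P₁ P₂ hP₁contr
        hP₁pos hP₂pos hP₁ev hP₂ev hP₁faith f)
      (stmt15_norm_le act j₂ j₁ hj₂mul hj₁mul hj₂star hj₁star hj₂dense P₂ P₁ hP₂contr
        hP₂pos hP₁pos hP₂ev hP₁ev hP₂faith f)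
  letI : NormedAddCommGroup (Γ →₀ A) := NormedAddCommGroup.induced _ _ j₁ hj₁inj
  have isom1 : Isometry ⇑j₁ := AddMonoidHomClass.isometry_of_norm j₁ fun x => rfl
  have isom2 : Isometry ⇑j₂ := AddMonoidHomClass.isometry_of_norm j₂ fun x => (hnorm x).symm
  have ui : IsUniformInducing ⇑j₁ := isom1.isUniformInducing
  have hdr : DenseRange ⇑j₁ := hj₁dense
  obtain ⟨Φ₀, hΦc, hext⟩ : ∃ Φ₀ : B₁ → B₂, Continuous Φ₀ ∧ ∀ x, Φ₀ (j₁ x) = j₂ x :=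
    ⟨_, (uniformContinuous_uniformly_extend ui hdr isom2.uniformContinuous).continuous,
      fun x => (ui.isDenseInducing hdr).extend_eq isom2.continuous x⟩
  have ext1 : ∀ (F G : B₁ → B₂), Continuous F → Continuous G →
      (∀ x, F (j₁ x) = G (j₁ x)) → ∀ b, F b = G b := by
    intro F G hF hG hfg b
    have heqon : Set.EqOn F G (Set.range ⇑j₁) := by rintro - ⟨x, rfl⟩; exact hfg x
    exact congrFun (hF.ext_on hj₁dense hG heqon) b
  have hΦ0 : Φ₀ 0 = 0 := by simpa using hext 0
  have hadd : ∀ a b, Φ₀ (a + b) = Φ₀ a + Φ₀ b := by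
    have step1 : ∀ (x : Γ →₀ A) (b : B₁), Φ₀ (j₁ x + b) = j₂ x + Φ₀ b := by
      intro x
      refine ext1 _ _ (hΦc.comp (continuous_const.add continuous_id))
        (continuous_const.add hΦc) ?_
      intro y
      rw [← map_add, hext, hext, map_add]
    intro a b
    exact ext1 (fun a => Φ₀ (a + b)) (fun a => Φ₀ a + Φ₀ b)
      (hΦc.comp (continuous_id.add continuous_const)) (hΦc.add continuous_const)
      (fun x => by show Φ₀ (j₁ x + b) = Φ₀ (j₁ x) + Φ₀ b; rw [step1 x b, hext]) a
  have hsmul : ∀ (r : ℂ) (b : B₁), Φ₀ (r • b) = r • Φ₀ b := by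
    intro r
    refine ext1 _ _ (hΦc.comp (continuous_id.const_smul r)) (hΦc.const_smul r) ?_
    intro x
    rw [← map_smul, hext, hext, map_smul]
  have hstar : ∀ b, Φ₀ (star b) = star (Φ₀ b) := by
    refine ext1 _ _ (hΦc.comp continuous_star) (continuous_star.comp hΦc) ?_
    intro x
    rw [← hj₁star, hext, hext, hj₂star]
  have hmul : ∀ a b, Φ₀ (a * b) = Φ₀ a * Φ₀ b := by
    have step1 : ∀ (x : Γ →₀ A) (b : B₁), Φ₀ (j₁ x * b) = j₂ x * Φ₀ b := by
      intro x
      refine ext1 _ _ (hΦc.comp (continuous_const.mul continuous_id))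
        (continuous_const.mul hΦc) ?_
      intro y
      rw [← hj₁mul, hext, hext, hj₂mul]
    intro a b
    exact ext1 (fun a => Φ₀ (a * b)) (fun a => Φ₀ a * Φ₀ b)
      (hΦc.comp (continuous_id.mul continuous_const)) (hΦc.mul continuous_const)
      (fun x => by show Φ₀ (j₁ x * b) = Φ₀ (j₁ x) * Φ₀ b; rw [step1 x b, hext]) a
  have hneg : ∀ b, Φ₀ (-b) = -Φ₀ b := by
    intro b
    have hab : Φ₀ b + Φ₀ (-b) = 0 := by rw [← hadd, add_neg_cancel, hΦ0]
    exact eq_neg_of_add_eq_zero_right hab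
  have hnormΦ : ∀ b, ‖Φ₀ b‖ = ‖b‖ := by
    intro b
    refine congrFun ((continuous_norm.comp hΦc).ext_on hj₁dense continuous_norm ?_) b
    rintro - ⟨x, rfl⟩
    show ‖Φ₀ (j₁ x)‖ = ‖j₁ x‖
    rw [hext, hnorm]
  have hdist : ∀ a b, dist (Φ₀ a) (Φ₀ b) = dist a b := by
    intro a b
    have hsub2 : Φ₀ (a - b) = Φ₀ a - Φ₀ b := by
      rw [sub_eq_add_neg, hadd, hneg, ← sub_eq_add_neg]
    rw [dist_eq_norm, dist_eq_norm, ← hsub2, hnormΦ]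
  have isomΦ : Isometry Φ₀ := Isometry.of_dist_eq hdist
  have hsurj : Function.Surjective Φ₀ := by
    have hclosed : IsClosed (Set.range Φ₀) := isomΦ.isClosedEmbedding.isClosed_range
    have hsub : Set.range ⇑j₂ ⊆ Set.range Φ₀ := by
      rintro - ⟨x, rfl⟩; exact ⟨j₁ x, hext x⟩
    intro b
    have hcc := closure_minimal hsub hclosed
    rw [hj₂dense.closure_eq] at hcc
    exact hcc (Set.mem_univ b)
  have hinj : Function.Injective Φ₀ := isomΦ.injective
  let e : B₁ ≃ B₂ := Equiv.ofBijective Φ₀ ⟨hinj, hsurj⟩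
  refine ⟨{ toFun := Φ₀, invFun := e.symm, left_inv := e.left_inv, right_inv := e.right_inv,
            map_mul' := hmul, map_add' := hadd, map_smul' := hsmul, map_star' := hstar },
    ?_, ?_⟩
  · exact isomΦ
  · exact hext
end
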